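/- Let k ≥ 2 be an integer and α ∈ (1 − 1/k, 1). Define b : ℝ² → (0,∞) by b(z,w) := (1 + |z + w|^α)^{−1} · ((1 + |z|^α)^{−1} + (1 + |w|^α)^{−1}). Let g : ℝ → ℂ be measurable with |g(x)| ≤ C/(1 + |x|) for all x ∈ ℝ, for some constant C > 0. Then ∫_{ℝ^{2k}} |g(z₁ + … + z_k)| · |g(w₁ + … + w_k)| · b(z₁,w₁) ⋯ b(z_k,w_k) dz₁ … dz_k dw₁ … dw_k < ∞. -/

import Mathlib

open MeasureTheory Filter Set
open scoped ENNReal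

/-- The kernel `b(z,w) = (1+|z+w|^α)⁻¹ ((1+|z|^α)⁻¹ + (1+|w|^α)⁻¹)`. -/
noncomputable def bKer (α : ℝ) (z w : ℝ) : ℝ :=
  (1 + |z + w| ^ α)⁻¹ * ((1 + |z| ^ α)⁻¹ + (1 + |w| ^ α)⁻¹)

namespace Stmt8Helpers

abbrev G := ℝ × ℝ

/-- The kernel as an `ℝ≥0∞`-valued function on `ℝ²`. -/
noncomputable def Bf (α : ℝ) : G → ℝ≥0∞ := fun x => ENNReal.ofReal (bKer α x.1 x.2)

lemma bKer_nonneg (α : ℝ) (z w : ℝ) : 0 ≤ bKer α z w := by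
  unfold bKer
  have h1 : (0:ℝ) ≤ 1 + |z + w| ^ α := by positivity
  have h2 : (0:ℝ) ≤ 1 + |z| ^ α := by positivity
  have h3 : (0:ℝ) ≤ 1 + |w| ^ α := by positivity
  positivity

lemma continuous_bKer (hα : 0 ≤ α) : Continuous fun p : G => bKer α p.1 p.2 := by
  have h : ∀ f : G → ℝ, Continuous f → Continuous fun p : G => (1 + |f p| ^ α)⁻¹ := by
    intro f hf
    have hc : Continuous fun p : G => 1 + |f p| ^ α :=
      continuous_const.add (hf.abs.rpow_const fun x => Or.inr hα)
    exact hc.inv₀ fun x => by positivity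
  exact ((h _ (continuous_fst.add continuous_snd)).mul
    ((h _ continuous_fst).add (h _ continuous_snd)))

lemma measurable_Bf (hα : 0 ≤ α) : Measurable (Bf α) :=
  ENNReal.measurable_ofReal.comp (continuous_bKer hα).measurable

/-- `n`-fold convolution power of the kernel: `rho α n = B^{*(n+1)}`. -/
noncomputable def rho (α : ℝ) : ℕ → G → ℝ≥0∞
  | 0 => Bf α
  | n+1 => fun s => ∫⁻ x, Bf α x * rho α n (s - x)

lemma measurable_rho (hα : 0 ≤ α) : ∀ n, Measurable (rho α n)
  | 0 => measurable_Bf hα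
  | n+1 => by
    have h : Measurable (Function.uncurry fun s x => Bf α x * rho α n (s - x)) :=
      (((measurable_Bf hα).comp measurable_snd).mul
        ((measurable_rho hα n).comp (measurable_fst.sub measurable_snd)))
    exact h.lintegral_prod_right

lemma lintegral_sub_left_eq_self (f : G → ℝ≥0∞) (hf : Measurable f) (s : G) :
    ∫⁻ x, f (s - x) = ∫⁻ x, f x := by
  have h1 : ∫⁻ x : G, f (s + (-x)) = ∫⁻ x : G, f (s + x) :=
    (Measure.measurePreserving_neg (volume : Measure G)).lintegral_comp
      (hf.comp (measurable_const_add s))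
  simp_rw [sub_eq_add_neg]
  rw [h1, lintegral_add_left_eq_self (fun x => f x) s]

/-- Young's convolution inequality, `ℝ≥0∞`-version, on `ℝ²`. -/
lemma young {B ρ : G → ℝ≥0∞} (hB : Measurable B) (hρ : Measurable ρ)
    {r q q' : ℝ} (hr : 1 < r) (hq : 1 < q) (hq' : 0 < q')
    (hrel : 1/r + 1/q = 1 + 1/q') :
    ∫⁻ s, (∫⁻ x, B x * ρ (s - x)) ^ q' ≤
      ((∫⁻ x, B x ^ r) ^ (1/r) * (∫⁻ x, ρ x ^ q) ^ (1/q)) ^ q' := by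
  have hr0 : (0:ℝ) < r := by linarith
  have hq0 : (0:ℝ) < q := by linarith
  have hq'0 : q' ≠ 0 := ne_of_gt hq'
  set IB := ∫⁻ x, B x ^ r with hIBdef
  set Iρ := ∫⁻ x, ρ x ^ q with hIρdef
  set e1 : ℝ := 1/q' with he1def
  set e2 : ℝ := 1 - 1/q with he2def
  set e3 : ℝ := 1 - 1/r with he3def
  have he1 : 0 ≤ e1 := by rw [he1def]; positivity
  have he2 : 0 ≤ e2 := by
    rw [he2def]
    have : 1/q < 1 := by rw [div_lt_one hq0]; exact hq
    linarith
  have he3 : 0 ≤ e3 := by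
    rw [he3def]
    have : 1/r < 1 := by rw [div_lt_one hr0]; exact hr
    linarith
  have h12 : e1 + e2 = 1/r := by rw [he1def, he2def]; linarith
  have h13 : e1 + e3 = 1/q := by rw [he1def, he3def]; linarith
  have hre : r * (e1 + e2) = 1 := by rw [h12]; field_simp
  have hqe : q * (e1 + e3) = 1 := by rw [h13]; field_simp
  have key : ∀ (a : ℝ≥0∞) (c u v : ℝ), 0 ≤ c → 0 ≤ u → 0 ≤ v → c * (u + v) = 1 →
      (a ^ c) ^ u * (a ^ c) ^ v = a := by
    intro a c u v hc hu hv huv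
    rw [← ENNReal.rpow_mul, ← ENNReal.rpow_mul,
      ← ENNReal.rpow_add_of_nonneg (c*u) (c*v) (mul_nonneg hc hu) (mul_nonneg hc hv),
      ← mul_add, huv, ENNReal.rpow_one]
  have hpt : ∀ s x : G, B x * ρ (s - x) =
      (B x ^ r * ρ (s - x) ^ q) ^ e1 * ((B x ^ r) ^ e2 * (ρ (s - x) ^ q) ^ e3) := by
    intro s x
    rw [ENNReal.mul_rpow_of_nonneg _ _ he1, mul_mul_mul_comm,
      key (B x) r e1 e2 hr0.le he1 he2 hre, key (ρ (s-x)) q e1 e3 hq0.le he1 he3 hqe]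
  have hρq : Measurable fun x => ρ x ^ q := hρ.pow_const _
  have hBr : Measurable fun x => B x ^ r := hB.pow_const _
  have hmuncurry : Measurable (Function.uncurry fun s x : G => B x ^ r * ρ (s - x) ^ q) :=
    (hBr.comp measurable_snd).mul (hρq.comp (measurable_fst.sub measurable_snd))
  have hW : Measurable fun s : G => ∫⁻ x, B x ^ r * ρ (s - x) ^ q :=
    hmuncurry.lintegral_prod_right
  have hIρs : ∀ s : G, (∫⁻ x, ρ (s - x) ^ q) = Iρ := fun s =>
    lintegral_sub_left_eq_self (fun x => ρ x ^ q) hρq s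
  have holder : ∀ s : G, (∫⁻ x, B x * ρ (s - x)) ≤
      (∫⁻ x, B x ^ r * ρ (s - x) ^ q) ^ e1 * (IB ^ e2 * Iρ ^ e3) := by
    intro s
    set f : Fin 3 → G → ℝ≥0∞ :=
      ![fun x => B x ^ r * ρ (s-x) ^ q, fun x => B x ^ r, fun x => ρ (s-x) ^ q] with hfdef
    set pe : Fin 3 → ℝ := ![e1, e2, e3] with hpedef
    have hmeas : ∀ i ∈ Finset.univ, AEMeasurable (f i) (volume : Measure G) := by
      intro i _
      fin_cases i
      · exact (hBr.mul (hρq.comp (measurable_const.sub measurable_id))).aemeasurable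
      · exact hBr.aemeasurable
      · exact (hρq.comp (measurable_const.sub measurable_id)).aemeasurable
    have hsum : ∑ i, pe i = 1 := by
      rw [hpedef, Fin.sum_univ_three]
      simp only [Matrix.cons_val_zero, Matrix.cons_val_one, Matrix.head_cons,
        Matrix.cons_val_two, Matrix.tail_cons]
      rw [he1def, he2def, he3def]; linarith
    have hnn : ∀ i ∈ Finset.univ, (0:ℝ) ≤ pe i := by
      intro i _
      fin_cases i <;>
        simp only [hpedef, Matrix.cons_val_zero, Matrix.cons_val_one, Matrix.head_cons,
          Matrix.cons_val_two, Matrix.tail_cons]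
      · exact he1
      · exact he2
      · exact he3
    have happ := ENNReal.lintegral_prod_norm_pow_le Finset.univ hmeas hsum hnn
    have hL : ∫⁻ a : G, ∏ i, f i a ^ pe i = ∫⁻ x, B x * ρ (s - x) := by
      apply lintegral_congr
      intro a
      rw [Fin.prod_univ_three]
      simp only [hfdef, hpedef, Matrix.cons_val_zero, Matrix.cons_val_one, Matrix.head_cons,
        Matrix.cons_val_two, Matrix.tail_cons]
      rw [hpt s a, mul_assoc]
    have hR : ∏ i, (∫⁻ a, f i a) ^ pe i
        = (∫⁻ x, B x ^ r * ρ (s - x) ^ q) ^ e1 * (IB ^ e2 * Iρ ^ e3) := by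
      rw [Fin.prod_univ_three]
      simp only [hfdef, hpedef, Matrix.cons_val_zero, Matrix.cons_val_one, Matrix.head_cons,
        Matrix.cons_val_two, Matrix.tail_cons]
      rw [hIρs s, mul_assoc]
    rw [hL, hR] at happ
    exact happ
  have hmain : ∀ s : G, (∫⁻ x, B x * ρ (s - x)) ^ q' ≤
      (IB ^ e2 * Iρ ^ e3) ^ q' * ∫⁻ x, B x ^ r * ρ (s - x) ^ q := by
    intro s
    refine (ENNReal.rpow_le_rpow (holder s) hq'.le).trans_eq ?_
    rw [ENNReal.mul_rpow_of_nonneg _ _ hq'.le, ← ENNReal.rpow_mul]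
    have : e1 * q' = 1 := by rw [he1def]; field_simp
    rw [this, ENNReal.rpow_one, mul_comm]
  calc ∫⁻ s, (∫⁻ x, B x * ρ (s - x)) ^ q'
      ≤ ∫⁻ s, (IB ^ e2 * Iρ ^ e3) ^ q' * ∫⁻ x, B x ^ r * ρ (s - x) ^ q :=
        lintegral_mono hmain
    _ = (IB ^ e2 * Iρ ^ e3) ^ q' * ∫⁻ s, ∫⁻ x, B x ^ r * ρ (s - x) ^ q :=
        lintegral_const_mul _ hW
    _ = (IB ^ e2 * Iρ ^ e3) ^ q' * (IB * Iρ) := by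
        congr 1
        rw [lintegral_lintegral_swap hmuncurry.aemeasurable]
        have hx : ∀ x : G, ∫⁻ s, B x ^ r * ρ (s - x) ^ q = B x ^ r * Iρ := by
          intro x
          rw [lintegral_const_mul (f := fun s => ρ (s - x) ^ q) _
            (hρq.comp (measurable_sub_const x))]
          congr 1
          exact lintegral_sub_right_eq_self (fun s => ρ s ^ q) x
        simp_rw [hx]
        rw [lintegral_mul_const _ hBr]
    _ = (IB ^ (1/r) * Iρ ^ (1/q)) ^ q' := by
        rw [ENNReal.mul_rpow_of_nonneg _ _ hq'.le, ENNReal.mul_rpow_of_nonneg _ _ hq'.le,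
          mul_mul_mul_comm]
        have hE2 : e2 * q' + 1 = 1/r * q' := by
          have h : 1/r = 1/q' + e2 := by rw [he2def]; linarith
          have h2 : 1/q' * q' = 1 := by field_simp
          rw [h, add_mul, h2]; ring
        have hE3 : e3 * q' + 1 = 1/q * q' := by
          have h : 1/q = 1/q' + e3 := by rw [he3def]; linarith
          have h2 : 1/q' * q' = 1 := by field_simp
          rw [h, add_mul, h2]; ring
        congr 1
        · rw [← ENNReal.rpow_mul, ← ENNReal.rpow_mul]
          nth_rewrite 2 [← ENNReal.rpow_one IB]
          rw [← ENNReal.rpow_add_of_nonneg _ _ (mul_nonneg he2 hq'.le) zero_le_one, hE2]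
        · rw [← ENNReal.rpow_mul, ← ENNReal.rpow_mul]
          nth_rewrite 2 [← ENNReal.rpow_one Iρ]
          rw [← ENNReal.rpow_add_of_nonneg _ _ (mul_nonneg he3 hq'.le) zero_le_one, hE3]

/-- norm bound on convolution powers. -/
lemma rho_bound {α r : ℝ} (hα : 0 ≤ α) (hr : 1 < r) :
    ∀ n : ℕ, ∀ q : ℝ, 1/q = ((n:ℝ)+1)/r - n → 0 < 1/q →
      (∫⁻ s, rho α n s ^ q) ^ (1/q) ≤ (∫⁻ x, Bf α x ^ r) ^ (((n:ℝ)+1)/r) := by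
  have hr0 : (0:ℝ) < r := by linarith
  intro n
  induction n with
  | zero =>
    intro q hq hqpos
    have hq0 : 0 < q := one_div_pos.mp hqpos
    have hqr : q = r := by
      have h : 1/q = 1/r := by simpa using hq
      rw [one_div, one_div] at h
      exact inv_injective h
    subst hqr
    simp only [rho, Nat.cast_zero]
    norm_num
  | succ n ih =>
    intro q hq hqpos
    push_cast at hq ⊢
    have hq0 : 0 < q := one_div_pos.mp hqpos
    have hsplit : ((n:ℝ)+1+1)/r = ((n:ℝ)+1)/r + 1/r := by ring
    have hrinv1 : 1/r < 1 := by rw [div_lt_one hr0]; exact hr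
    have hτpos : 0 < ((n:ℝ)+1)/r - n := by linarith
    set qn := (((n:ℝ)+1)/r - n)⁻¹ with hqndef
    have hqn_inv : 1/qn = ((n:ℝ)+1)/r - n := by rw [hqndef, one_div, inv_inv]
    have hqn_pos : 0 < 1/qn := hqn_inv ▸ hτpos
    have hτlt1 : ((n:ℝ)+1)/r - n < 1 := by
      have : ((n:ℝ)+1)/r < (n:ℝ)+1 := div_lt_self (by positivity) hr
      linarith
    have hqn1 : 1 < qn := by
      rw [hqndef]
      exact (one_lt_inv₀ hτpos).mpr hτlt1
    have hq1 : 1 < q := by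
      have h1 : 1/q < 1 := by linarith
      rwa [div_lt_one hq0] at h1
    have hrel : 1/r + 1/qn = 1 + 1/q := by rw [hqn_inv, hq]; linarith
    have hyoung := young (measurable_Bf hα) (measurable_rho hα n) hr hqn1 hq0 hrel
    have ihn := ih qn hqn_inv hqn_pos
    have hq1q : q * (1/q) = 1 := by field_simp
    calc (∫⁻ s, rho α (n+1) s ^ q) ^ (1/q)
        ≤ (((∫⁻ x, Bf α x ^ r) ^ (1/r) * (∫⁻ s, rho α n s ^ qn) ^ (1/qn)) ^ q) ^ (1/q) :=
          ENNReal.rpow_le_rpow hyoung (le_of_lt hqpos)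
      _ = (∫⁻ x, Bf α x ^ r) ^ (1/r) * (∫⁻ s, rho α n s ^ qn) ^ (1/qn) := by
          rw [← ENNReal.rpow_mul, hq1q, ENNReal.rpow_one]
      _ ≤ (∫⁻ x, Bf α x ^ r) ^ (1/r) * (∫⁻ x, Bf α x ^ r) ^ (((n:ℝ)+1)/r) :=
          mul_le_mul_right ihn _
      _ = (∫⁻ x, Bf α x ^ r) ^ ((((n:ℕ):ℝ)+1+1)/r) := by
          rw [← ENNReal.rpow_add_of_nonneg _ _ (by positivity) (by positivity)]
          congr 1
          rw [hsplit]; ring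

/-- identification of the multiple integral with the convolution power. -/
lemma T_eq {α : ℝ} (hα : 0 ≤ α) :
    ∀ n, ∀ H : G → ℝ≥0∞, Measurable H →
      ∫⁻ y : Fin (n+1) → G, H (∑ i, y i) * ∏ i, Bf α (y i) = ∫⁻ s, H s * rho α n s := by
  intro n
  induction n with
  | zero =>
    intro H hH
    have h := (volume_preserving_funUnique (Fin 1) G).lintegral_comp
      (f := fun s => H s * Bf α s) (hH.mul (measurable_Bf hα))
    rw [show rho α 0 = Bf α from rfl, ← h]
    apply lintegral_congr
    intro y
    simp [MeasurableEquiv.funUnique, Equiv.funUnique]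
  | succ n ih =>
    intro H hH
    have hBm := measurable_Bf hα
    have hρm := measurable_rho hα n
    have mp := volume_preserving_piFinSuccAbove (fun _ : Fin (n+1+1) => G) 0
    have hFm : Measurable fun y : Fin (n+1+1) → G => H (∑ i, y i) * ∏ i, Bf α (y i) :=
      (hH.comp (Finset.measurable_sum Finset.univ fun i _ => measurable_pi_apply i)).mul
        (Finset.measurable_prod Finset.univ fun i _ => hBm.comp (measurable_pi_apply i))
    have h2 := (MeasurePreserving.symm _ mp).lintegral_comp hFm
    rw [← h2]
    have hstep : ∀ z : G × (Fin (n+1) → G),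
        (fun y : Fin (n+1+1) → G => H (∑ i, y i) * ∏ i, Bf α (y i))
            ((MeasurableEquiv.piFinSuccAbove (fun _ : Fin (n+1+1) => G) 0).symm z)
          = H (z.1 + ∑ i, z.2 i) * (Bf α z.1 * ∏ i, Bf α (z.2 i)) := by
      intro z
      rw [MeasurableEquiv.piFinSuccAbove_symm_apply]
      simp [Fin.insertNth_zero, Fin.sum_univ_succ, Fin.prod_univ_succ]
    simp only [hstep]
    rw [Measure.volume_eq_prod]
    have hm2 : Measurable fun z : G × (Fin (n+1) → G) =>
        H (z.1 + ∑ i, z.2 i) * (Bf α z.1 * ∏ i, Bf α (z.2 i)) :=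
      (hH.comp (measurable_fst.add
          (Finset.measurable_sum Finset.univ fun i _ =>
            (measurable_pi_apply i).comp measurable_snd))).mul
        ((hBm.comp measurable_fst).mul
          (Finset.measurable_prod Finset.univ fun i _ =>
            hBm.comp ((measurable_pi_apply i).comp measurable_snd)))
    rw [lintegral_prod _ hm2.aemeasurable]
    have inner : ∀ a : G,
        (∫⁻ y : Fin (n+1) → G, H (a + ∑ i, y i) * (Bf α a * ∏ i, Bf α (y i)))
          = Bf α a * ∫⁻ s, H s * rho α n (s - a) := by
      intro a
      have rearr : ∀ y : Fin (n+1) → G,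
          H (a + ∑ i, y i) * (Bf α a * ∏ i, Bf α (y i))
            = Bf α a * (H (a + ∑ i, y i) * ∏ i, Bf α (y i)) := fun y => by ring
      simp only [rearr]
      rw [lintegral_const_mul
        (f := fun y : Fin (n+1) → G => H (a + ∑ i, y i) * ∏ i, Bf α (y i)) _
        ((hH.comp ((Finset.measurable_sum Finset.univ fun i _ =>
            measurable_pi_apply i).const_add a)).mul
          (Finset.measurable_prod Finset.univ fun i _ => hBm.comp (measurable_pi_apply i)))]
      congr 1
      rw [ih (fun s => H (a + s)) (hH.comp (measurable_const_add a))]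
      have htr := lintegral_sub_right_eq_self (μ := (volume : Measure G)) (fun s => H (a + s) * rho α n s) a
      rw [← htr]
      apply lintegral_congr
      intro s
      rw [add_sub_cancel]
    simp only [inner]
    have hu : Measurable (Function.uncurry fun (a s : G) => Bf α a * (H s * rho α n (s - a))) :=
      (hBm.comp measurable_fst).mul
        ((hH.comp measurable_snd).mul (hρm.comp (measurable_snd.sub measurable_fst)))
    calc ∫⁻ a : G, Bf α a * ∫⁻ s, H s * rho α n (s - a)
        = ∫⁻ a : G, ∫⁻ s, Bf α a * (H s * rho α n (s - a)) := by
          apply lintegral_congr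
          intro a
          rw [lintegral_const_mul (f := fun s => H s * rho α n (s - a)) _
            (hH.mul (hρm.comp (measurable_sub_const a)))]
      _ = ∫⁻ s, ∫⁻ a, Bf α a * (H s * rho α n (s - a)) := lintegral_lintegral_swap hu.aemeasurable
      _ = ∫⁻ s, H s * rho α (n+1) s := by
          apply lintegral_congr
          intro s
          have hc : ∀ a : G, Bf α a * (H s * rho α n (s - a))
              = H s * (Bf α a * rho α n (s - a)) := fun a => by ring
          simp only [hc]
          rw [lintegral_const_mul (f := fun a => Bf α a * rho α n (s - a)) _
            (hBm.mul (hρm.comp (measurable_const.sub measurable_id)))]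
          rfl

lemma add_rpow_le_two_rpow_mul (u v : ℝ≥0∞) {r : ℝ} (hr : 0 ≤ r) :
    (u + v) ^ r ≤ 2 ^ r * (u ^ r + v ^ r) := by
  have h1 : u + v ≤ 2 * max u v := by
    rw [two_mul]
    exact add_le_add (le_max_left u v) (le_max_right u v)
  calc (u + v) ^ r ≤ (2 * max u v) ^ r := ENNReal.rpow_le_rpow h1 hr
    _ = 2 ^ r * (max u v) ^ r := ENNReal.mul_rpow_of_nonneg _ _ hr
    _ ≤ 2 ^ r * (u ^ r + v ^ r) := by
        gcongr
        rcases le_total u v with h | h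
        · rw [max_eq_right h]; exact le_add_self
        · rw [max_eq_left h]; exact le_add_right le_rfl

/-- subadditivity of rpow. -/
lemma one_add_rpow_le {α : ℝ} (hα0 : 0 ≤ α) (hα1 : α ≤ 1) {t : ℝ} (ht : 0 ≤ t) :
    (1 + t) ^ α ≤ 1 + t ^ α := by
  have h := NNReal.rpow_add_le_add_rpow 1 t.toNNReal hα0 hα1
  have h2 := NNReal.coe_le_coe.mpr h
  simpa [NNReal.coe_rpow, Real.coe_toNNReal t ht] using h2

lemma psi_le {α r : ℝ} (hα0 : 0 ≤ α) (hα1 : α ≤ 1) (hr : 0 ≤ r) (u : ℝ) :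
    ((1 + |u| ^ α)⁻¹) ^ r ≤ (1 + |u|) ^ (-(α * r)) := by
  have hpos : (0:ℝ) < 1 + |u| := by positivity
  have h1 : (1 + |u|) ^ α ≤ 1 + |u| ^ α := one_add_rpow_le hα0 hα1 (abs_nonneg u)
  have hbpos : (0:ℝ) < (1 + |u|) ^ α := Real.rpow_pos_of_pos hpos α
  have h2 : (1 + |u| ^ α)⁻¹ ≤ ((1 + |u|) ^ α)⁻¹ := by
    apply inv_anti₀ hbpos h1
  have h3 : ((1 + |u| ^ α)⁻¹) ^ r ≤ (((1 + |u|) ^ α)⁻¹) ^ r := by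
    apply Real.rpow_le_rpow (by positivity) h2 hr
  refine h3.trans_eq ?_
  rw [← Real.rpow_neg hpos.le, ← Real.rpow_mul hpos.le]
  ring_nf

lemma continuous_psi {α r : ℝ} (hα0 : 0 ≤ α) (hr : 0 ≤ r) :
    Continuous fun u : ℝ => ((1 + |u| ^ α)⁻¹) ^ r := by
  have hc : Continuous fun u : ℝ => 1 + |u| ^ α :=
    continuous_const.add (continuous_abs.rpow_const fun x => Or.inr hα0)
  exact (hc.inv₀ fun x => by positivity).rpow_const fun x => Or.inr hr

/-- One-dimensional integral finiteness. -/
lemma Ipsi_lt_top {α r : ℝ} (hα0 : 0 ≤ α) (hα1 : α ≤ 1) (hαr : 1 < α * r) (hr : 0 ≤ r) :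
    ∫⁻ u : ℝ, ENNReal.ofReal (((1 + |u| ^ α)⁻¹) ^ r) < ⊤ := by
  have hb : ∀ u : ℝ, ENNReal.ofReal (((1 + |u| ^ α)⁻¹) ^ r)
      ≤ ENNReal.ofReal ((1 + ‖u‖) ^ (-(α * r))) := by
    intro u
    apply ENNReal.ofReal_le_ofReal
    simpa [Real.norm_eq_abs] using psi_le hα0 hα1 hr u
  calc ∫⁻ u : ℝ, ENNReal.ofReal (((1 + |u| ^ α)⁻¹) ^ r)
      ≤ ∫⁻ u : ℝ, ENNReal.ofReal ((1 + ‖u‖) ^ (-(α * r))) := lintegral_mono hb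
    _ < ⊤ := by
        apply finite_integral_one_add_norm
        simpa using hαr

/-- `L^r`-finiteness of the kernel. -/
lemma IB_lt_top {α r : ℝ} (hα0 : 0 ≤ α) (hα1 : α ≤ 1) (hαr : 1 < α * r) (hr : 0 ≤ r) :
    ∫⁻ x : G, Bf α x ^ r < ⊤ := by
  set ψ : ℝ → ℝ≥0∞ := fun u => ENNReal.ofReal (((1 + |u| ^ α)⁻¹) ^ r) with hψdef
  have hψm : Measurable ψ := ENNReal.measurable_ofReal.comp (continuous_psi hα0 hr).measurable
  have hIψ : ∫⁻ u, ψ u < ⊤ := Ipsi_lt_top hα0 hα1 hαr hr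
  have hpt : ∀ x : G, Bf α x ^ r ≤ 2 ^ r * (ψ (x.1 + x.2) * ψ x.1 + ψ (x.1 + x.2) * ψ x.2) := by
    intro x
    have hc : (0:ℝ) ≤ (1 + |x.1 + x.2| ^ α)⁻¹ := by positivity
    have ha : (0:ℝ) ≤ (1 + |x.1| ^ α)⁻¹ := by positivity
    have hb2 : (0:ℝ) ≤ (1 + |x.2| ^ α)⁻¹ := by positivity
    have h1 : Bf α x = ENNReal.ofReal ((1 + |x.1 + x.2| ^ α)⁻¹ * (1 + |x.1| ^ α)⁻¹)
        + ENNReal.ofReal ((1 + |x.1 + x.2| ^ α)⁻¹ * (1 + |x.2| ^ α)⁻¹) := by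
      rw [Bf]
      show ENNReal.ofReal (bKer α x.1 x.2) = _
      rw [bKer, mul_add, ENNReal.ofReal_add (by positivity) (by positivity)]
    have h2 : ENNReal.ofReal ((1 + |x.1 + x.2| ^ α)⁻¹ * (1 + |x.1| ^ α)⁻¹) ^ r
        = ψ (x.1 + x.2) * ψ x.1 := by
      rw [ENNReal.ofReal_rpow_of_nonneg (by positivity) hr, Real.mul_rpow hc ha,
        ENNReal.ofReal_mul (by positivity)]
    have h3 : ENNReal.ofReal ((1 + |x.1 + x.2| ^ α)⁻¹ * (1 + |x.2| ^ α)⁻¹) ^ r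
        = ψ (x.1 + x.2) * ψ x.2 := by
      rw [ENNReal.ofReal_rpow_of_nonneg (by positivity) hr, Real.mul_rpow hc hb2,
        ENNReal.ofReal_mul (by positivity)]
    rw [h1]
    exact (add_rpow_le_two_rpow_mul _ _ hr).trans (by rw [h2, h3])
  have hm1 : Measurable fun x : G => ψ (x.1 + x.2) * ψ x.1 :=
    (hψm.comp (measurable_fst.add measurable_snd)).mul (hψm.comp measurable_fst)
  have hm2 : Measurable fun x : G => ψ (x.1 + x.2) * ψ x.2 :=
    (hψm.comp (measurable_fst.add measurable_snd)).mul (hψm.comp measurable_snd)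
  have hT1 : ∫⁻ x : G, ψ (x.1 + x.2) * ψ x.1 = (∫⁻ u, ψ u) * ∫⁻ u, ψ u := by
    rw [Measure.volume_eq_prod, lintegral_prod _ hm1.aemeasurable]
    have hz : ∀ z : ℝ, ∫⁻ w, ψ (z + w) * ψ z = (∫⁻ u, ψ u) * ψ z := by
      intro z
      rw [lintegral_mul_const (f := fun w => ψ (z + w)) _ (hψm.comp (measurable_const_add z))]
      congr 1
      simp_rw [add_comm z]
      exact lintegral_add_right_eq_self ψ z
    simp_rw [hz]
    exact lintegral_const_mul _ hψm
  have hT2 : ∫⁻ x : G, ψ (x.1 + x.2) * ψ x.2 = (∫⁻ u, ψ u) * ∫⁻ u, ψ u := by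
    rw [Measure.volume_eq_prod, lintegral_prod_symm _ hm2.aemeasurable]
    have hw : ∀ w : ℝ, ∫⁻ z, ψ (z + w) * ψ w = (∫⁻ u, ψ u) * ψ w := by
      intro w
      rw [lintegral_mul_const (f := fun z => ψ (z + w)) _ (hψm.comp (measurable_add_const w))]
      congr 1
      exact lintegral_add_right_eq_self ψ w
    simp_rw [hw]
    exact lintegral_const_mul _ hψm
  calc ∫⁻ x : G, Bf α x ^ r
      ≤ ∫⁻ x : G, 2 ^ r * (ψ (x.1 + x.2) * ψ x.1 + ψ (x.1 + x.2) * ψ x.2) := lintegral_mono hpt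
    _ = 2 ^ r * ((∫⁻ u, ψ u) * (∫⁻ u, ψ u) + (∫⁻ u, ψ u) * ∫⁻ u, ψ u) := by
        rw [lintegral_const_mul (f := fun x : G => ψ (x.1 + x.2) * ψ x.1 + ψ (x.1 + x.2) * ψ x.2) _ (hm1.add hm2), lintegral_add_left hm1, hT1, hT2]
    _ < ⊤ := by
        apply ENNReal.mul_lt_top
        · exact ENNReal.rpow_lt_top_of_nonneg hr (by norm_num)
        · exact ENNReal.add_lt_top.2 ⟨ENNReal.mul_lt_top hIψ hIψ, ENNReal.mul_lt_top hIψ hIψ⟩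

/-- finiteness of `∫ H^p` for the majorant of `g ⊗ g`. -/
lemma IH_lt_top {C p : ℝ} (hC : 0 < C) (hp : 1 < p) :
    ∫⁻ s : G, (ENNReal.ofReal (C / (1 + |s.1|)) * ENNReal.ofReal (C / (1 + |s.2|))) ^ p < ⊤ := by
  have hp0 : (0:ℝ) ≤ p := by linarith
  set φ : ℝ → ℝ≥0∞ := fun u => ENNReal.ofReal (C / (1 + |u|)) ^ p with hφdef
  have hcont : Continuous fun u : ℝ => C / (1 + |u|) :=
    continuous_const.div (continuous_const.add continuous_abs) fun x => by positivity
  have hφm : Measurable φ :=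
    (ENNReal.measurable_ofReal.comp hcont.measurable).pow_const _
  have hIφ : ∫⁻ u, φ u < ⊤ := by
    have hb : ∀ u : ℝ, φ u ≤ ENNReal.ofReal (C ^ p) * ENNReal.ofReal ((1 + ‖u‖) ^ (-p)) := by
      intro u
      have h1 : (0:ℝ) < 1 + |u| := by positivity
      rw [hφdef]
      simp only
      rw [ENNReal.ofReal_rpow_of_nonneg (by positivity) hp0, Real.div_rpow hC.le h1.le,
        div_eq_mul_inv, ← Real.rpow_neg h1.le, ENNReal.ofReal_mul (by positivity),
        Real.norm_eq_abs]
    calc ∫⁻ u, φ u ≤ ∫⁻ u, ENNReal.ofReal (C ^ p) * ENNReal.ofReal ((1 + ‖u‖) ^ (-p)) :=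
          lintegral_mono hb
      _ = ENNReal.ofReal (C ^ p) * ∫⁻ u : ℝ, ENNReal.ofReal ((1 + ‖u‖) ^ (-p)) :=
          lintegral_const_mul' _ _ ENNReal.ofReal_ne_top
      _ < ⊤ := ENNReal.mul_lt_top ENNReal.ofReal_lt_top
          (finite_integral_one_add_norm (by simpa using hp))
  have hfac : ∀ s : G,
      (ENNReal.ofReal (C / (1 + |s.1|)) * ENNReal.ofReal (C / (1 + |s.2|))) ^ p
        = φ s.1 * φ s.2 := fun s => ENNReal.mul_rpow_of_nonneg _ _ hp0
  simp_rw [hfac]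
  rw [Measure.volume_eq_prod,
    lintegral_prod (fun s : G => φ s.1 * φ s.2)
      ((hφm.comp measurable_fst).mul (hφm.comp measurable_snd)).aemeasurable]
  have hz : ∀ z : ℝ, ∫⁻ w, φ z * φ w = φ z * ∫⁻ u, φ u := fun z =>
    lintegral_const_mul _ hφm
  simp_rw [hz]
  rw [lintegral_mul_const _ hφm]
  exact ENNReal.mul_lt_top hIφ hIφ

end Stmt8Helpers

theorem stmt8 (k : ℕ) (hk : 2 ≤ k) (α : ℝ) (hα : α ∈ Set.Ioo (1 - 1 / (k : ℝ)) 1)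
    (g : ℝ → ℂ) (hg : Measurable g) (C : ℝ) (hC : 0 < C)
    (hgb : ∀ x : ℝ, ‖g x‖ ≤ C / (1 + |x|)) :
    ∫⁻ p : (Fin k → ℝ) × (Fin k → ℝ),
      ENNReal.ofReal
        (‖g (∑ i, p.1 i)‖ * ‖g (∑ i, p.2 i)‖ * ∏ i, bKer α (p.1 i) (p.2 i)) < ⊤ := by
  open Stmt8Helpers in
  obtain ⟨K, rfl⟩ : ∃ K, k = K + 1 := ⟨k - 1, by omega⟩
  obtain ⟨hαlow, hα1⟩ := hα
  push_cast at hαlow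
  have hk1 : (1:ℝ) ≤ K := by
    have h : 1 ≤ K := by omega
    exact_mod_cast h
  have hKpos : (0:ℝ) < K := by linarith
  have hK1pos : (0:ℝ) < K + 1 := by linarith
  have hα0 : 0 < α := by
    have h2 : 1 / ((K:ℝ)+1) ≤ 1/2 := by
      apply one_div_le_one_div_of_le <;> linarith
    linarith
  have hKα : (K:ℝ)/(K+1) < α := by
    have h : 1 - 1/((K:ℝ)+1) = K/(K+1) := by field_simp; ring
    linarith
  have hαinv : 1/α < ((K:ℝ)+1)/K := by
    rw [div_lt_div_iff₀ hα0 hKpos]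
    have h := (div_lt_iff₀ hK1pos).mp hKα
    nlinarith
  set r : ℝ := (1/α + ((K:ℝ)+1)/K)/2 with hrdef
  have hr_gt : 1/α < r := by rw [hrdef]; linarith
  have hr_lt : r < ((K:ℝ)+1)/K := by rw [hrdef]; linarith
  have hαinv1 : 1 < 1/α := by rw [lt_div_iff₀ hα0]; linarith
  have hr1 : 1 < r := by linarith
  have hr0 : (0:ℝ) < r := by linarith
  have hαr : 1 < α * r := by
    have h := (div_lt_iff₀ hα0).mp hr_gt
    nlinarith
  set τ : ℝ := ((K:ℝ)+1)/r - K with hτdef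
  have hτpos : 0 < τ := by
    rw [hτdef, sub_pos, lt_div_iff₀ hr0]
    have h := (lt_div_iff₀ hKpos).mp hr_lt
    nlinarith
  have hτlt1 : τ < 1 := by
    rw [hτdef]
    have h : ((K:ℝ)+1)/r < K+1 := div_lt_self (by positivity) hr1
    linarith
  set q : ℝ := τ⁻¹ with hqdef
  set p : ℝ := (1-τ)⁻¹ with hpdef
  have hq_inv : 1/q = ((K:ℝ)+1)/r - K := by rw [hqdef, one_div, inv_inv, hτdef]
  have hqpos : 0 < 1/q := by rw [hq_inv, ← hτdef]; exact hτpos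
  have hp1 : 1 < p := by
    rw [hpdef]
    exact (one_lt_inv₀ (by linarith)).mpr (by linarith)
  have hconj : p.HolderConjugate q := by
    rw [Real.holderConjugate_iff]
    constructor
    · exact hp1
    · rw [hpdef, hqdef, inv_inv, inv_inv]; ring
  set h1 : ℝ → ℝ≥0∞ := fun u => ENNReal.ofReal (C / (1 + |u|)) with hh1def
  have hh1m : Measurable h1 := by
    apply ENNReal.measurable_ofReal.comp
    exact (continuous_const.div (continuous_const.add continuous_abs)
      fun x : ℝ => (by positivity : (1:ℝ) + |x| ≠ 0)).measurable
  set H : G → ℝ≥0∞ := fun s => h1 s.1 * h1 s.2 with hHdef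
  have hHm : Measurable H := (hh1m.comp measurable_fst).mul (hh1m.comp measurable_snd)
  set F : (Fin (K+1) → ℝ) × (Fin (K+1) → ℝ) → ℝ≥0∞ :=
    fun pp => H (∑ i, pp.1 i, ∑ i, pp.2 i) * ∏ i, Bf α (pp.1 i, pp.2 i) with hFdef
  have hBm : Measurable (Bf α) := measurable_Bf hα0.le
  have hFm : Measurable F := by
    apply Measurable.mul
    · exact hHm.comp ((Finset.measurable_sum Finset.univ fun i _ =>
        (measurable_pi_apply i).comp measurable_fst).prodMk
        (Finset.measurable_sum Finset.univ fun i _ =>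
          (measurable_pi_apply i).comp measurable_snd))
    · exact Finset.measurable_prod Finset.univ fun i _ =>
        hBm.comp (((measurable_pi_apply i).comp measurable_fst).prodMk
          ((measurable_pi_apply i).comp measurable_snd))
  have hmono : (∫⁻ x : (Fin (K+1) → ℝ) × (Fin (K+1) → ℝ),
      ENNReal.ofReal
        (‖g (∑ i, x.1 i)‖ * ‖g (∑ i, x.2 i)‖ * ∏ i, bKer α (x.1 i) (x.2 i)))
      ≤ ∫⁻ x, F x := by
    apply lintegral_mono
    intro x
    show ENNReal.ofReal
        (‖g (∑ i, x.1 i)‖ * ‖g (∑ i, x.2 i)‖ * ∏ i, bKer α (x.1 i) (x.2 i)) ≤ F x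
    rw [ENNReal.ofReal_mul (mul_nonneg (norm_nonneg _) (norm_nonneg _)),
      ENNReal.ofReal_mul (norm_nonneg _),
      ENNReal.ofReal_prod_of_nonneg (fun i _ => bKer_nonneg α _ _)]
    have hg1 : ENNReal.ofReal ‖g (∑ i, x.1 i)‖ ≤ h1 (∑ i, x.1 i) :=
      ENNReal.ofReal_le_ofReal (hgb _)
    have hg2 : ENNReal.ofReal ‖g (∑ i, x.2 i)‖ ≤ h1 (∑ i, x.2 i) :=
      ENNReal.ofReal_le_ofReal (hgb _)
    exact mul_le_mul' (mul_le_mul' hg1 hg2) le_rfl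
  set e := MeasurableEquiv.arrowProdEquivProdArrow ℝ ℝ (Fin (K+1)) with hedef
  have harrow := measurePreserving_arrowProdEquivProdArrow ℝ ℝ (Fin (K+1))
    (fun _ => (volume : Measure ℝ)) (fun _ => (volume : Measure ℝ))
  have hchg : ∫⁻ x, F x = ∫⁻ y : Fin (K+1) → G, F (e y) :=
    (harrow.lintegral_comp hFm).symm
  have hmatch : ∀ y : Fin (K+1) → G, F (e y) = H (∑ i, y i) * ∏ i, Bf α (y i) := by
    intro y
    have h1' : (∑ i, y i) = (∑ i, (y i).1, ∑ i, (y i).2) := by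
      rw [Prod.ext_iff]
      exact ⟨Prod.fst_sum, Prod.snd_sum⟩
    show H (∑ i, (y i).1, ∑ i, (y i).2) * ∏ i, Bf α ((y i).1, (y i).2) = _
    rw [← h1']
  have hTeq := T_eq hα0.le K H hHm
  have hfinal := ENNReal.lintegral_mul_le_Lp_mul_Lq (volume : Measure G) hconj
    hHm.aemeasurable (measurable_rho hα0.le K).aemeasurable
  simp only [Pi.mul_apply] at hfinal
  have hrho := rho_bound hα0.le hr1 K q hq_inv hqpos
  have hIB := IB_lt_top hα0.le hα1.le hαr hr0.le
  have hIH : ∫⁻ s : G, H s ^ p < ⊤ := IH_lt_top hC hp1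
  calc (∫⁻ x : (Fin (K+1) → ℝ) × (Fin (K+1) → ℝ),
      ENNReal.ofReal
        (‖g (∑ i, x.1 i)‖ * ‖g (∑ i, x.2 i)‖ * ∏ i, bKer α (x.1 i) (x.2 i)))
      ≤ ∫⁻ x, F x := hmono
    _ = ∫⁻ y : Fin (K+1) → G, F (e y) := hchg
    _ = ∫⁻ s, H s * rho α K s := by simp_rw [hmatch]; exact hTeq
    _ ≤ (∫⁻ s, H s ^ p) ^ (1/p) * (∫⁻ s, rho α K s ^ q) ^ (1/q) := hfinal
    _ < ⊤ := by
        apply ENNReal.mul_lt_top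
        · exact ENNReal.rpow_lt_top_of_nonneg (by positivity) hIH.ne
        · exact lt_of_le_of_lt hrho
            (ENNReal.rpow_lt_top_of_nonneg (by positivity) hIB.ne)
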